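/- Let (Ω, ℱ, ℙ) be a probability space, T a positive integer, ε_1, …, ε_T ≥ 0, and θ_0, θ_1, …, θ_T : Ω → ℝⁿ square-integrable random vectors satisfying 𝔼[‖θ_{k+1} − G(θ_k)‖₂²] ≤ ε_{k+1} for all k = 0, 1, …, T−1, where G(θ) := (ΦᵀDΦ)⁻¹ΦᵀD(R + γPΦθ). Then 𝔼[‖Φθ_T − Φθ*‖_D] ≤ √(λ_max(ΦᵀDΦ)) · ∑_{k=1}^{T} γ^{T−k}√(ε_k) + γ^T 𝔼[‖Φθ_0 − Φθ*‖_D], where θ* := −(ΦᵀD(γP − I)Φ)⁻¹ΦᵀDR. -/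

import Mathlib

open Matrix BigOperators MeasureTheory ProbabilityTheory


namespace PTDaux


variable {N n : ℕ}

/-- weighted inner product -/
noncomputable def dip (d : Fin N → ℝ) (x y : Fin N → ℝ) : ℝ := ∑ s, d s * (x s * y s)

lemma dip_self_nonneg {d : Fin N → ℝ} (hd : ∀ s, 0 ≤ d s) (x : Fin N → ℝ) :
    0 ≤ dip d x x :=
  Finset.sum_nonneg fun s _ => mul_nonneg (hd s) (mul_self_nonneg _)

lemma dip_comm (d x y : Fin N → ℝ) : dip d x y = dip d y x := by
  unfold dip; congr 1; ext s; ring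

lemma dip_add_add (d a b : Fin N → ℝ) :
    dip d (a + b) (a + b) = dip d a a + 2 * dip d a b + dip d b b := by
  unfold dip
  simp only [Pi.add_apply, Finset.mul_sum, ← Finset.sum_add_distrib]
  congr 1; ext s; ring

lemma dip_smul_right (d : Fin N → ℝ) (c : ℝ) (x y : Fin N → ℝ) :
    dip d x (c • y) = c * dip d x y := by
  unfold dip
  simp only [Pi.smul_apply, smul_eq_mul, Finset.mul_sum]
  congr 1; ext s; ring

/-- Cauchy–Schwarz for the weighted inner product. -/
lemma dip_le_sqrt {d : Fin N → ℝ} (hd : ∀ s, 0 ≤ d s) (x y : Fin N → ℝ) :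
    dip d x y ≤ Real.sqrt (dip d x x) * Real.sqrt (dip d y y) := by
  have h := Finset.sum_mul_sq_le_sq_mul_sq Finset.univ
    (fun s => Real.sqrt (d s) * x s) (fun s => Real.sqrt (d s) * y s)
  have h1 : ∀ s : Fin N, (Real.sqrt (d s) * x s) * (Real.sqrt (d s) * y s)
      = d s * (x s * y s) := by
    intro s
    have hds : Real.sqrt (d s) * Real.sqrt (d s) = d s := Real.mul_self_sqrt (hd s)
    calc Real.sqrt (d s) * x s * (Real.sqrt (d s) * y s)
        = (Real.sqrt (d s) * Real.sqrt (d s)) * (x s * y s) := by ring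
      _ = d s * (x s * y s) := by rw [hds]
  have h2 : ∀ (z : Fin N → ℝ) (s : Fin N), (Real.sqrt (d s) * z s) ^ 2 = d s * (z s * z s) := by
    intro z s
    have hds : Real.sqrt (d s) * Real.sqrt (d s) = d s := Real.mul_self_sqrt (hd s)
    calc (Real.sqrt (d s) * z s) ^ 2
        = (Real.sqrt (d s) * Real.sqrt (d s)) * (z s * z s) := by ring
      _ = d s * (z s * z s) := by rw [hds]
  simp only [h1] at h
  have hx : (∑ s, (Real.sqrt (d s) * x s) ^ 2) = dip d x x := by
    unfold dip; exact Finset.sum_congr rfl fun s _ => h2 x s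
  have hy : (∑ s, (Real.sqrt (d s) * y s) ^ 2) = dip d y y := by
    unfold dip; exact Finset.sum_congr rfl fun s _ => h2 y s
  rw [hx, hy] at h
  calc dip d x y ≤ |dip d x y| := le_abs_self _
    _ = Real.sqrt ((dip d x y) ^ 2) := (Real.sqrt_sq_eq_abs _).symm
    _ ≤ Real.sqrt (dip d x x * dip d y y) := Real.sqrt_le_sqrt h
    _ = Real.sqrt (dip d x x) * Real.sqrt (dip d y y) :=
        Real.sqrt_mul (dip_self_nonneg hd x) _

/-- triangle inequality -/
lemma sqrt_dip_add {d : Fin N → ℝ} (hd : ∀ s, 0 ≤ d s) (a b : Fin N → ℝ) :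
    Real.sqrt (dip d (a + b) (a + b)) ≤ Real.sqrt (dip d a a) + Real.sqrt (dip d b b) := by
  have hcs := dip_le_sqrt hd a b
  have ha := dip_self_nonneg hd a
  have hb := dip_self_nonneg hd b
  have hsa := Real.sqrt_nonneg (dip d a a)
  have hsb := Real.sqrt_nonneg (dip d b b)
  have h1 : dip d (a + b) (a + b) ≤ (Real.sqrt (dip d a a) + Real.sqrt (dip d b b)) ^ 2 := by
    rw [dip_add_add]
    have ha2 : Real.sqrt (dip d a a) ^ 2 = dip d a a := Real.sq_sqrt ha
    have hb2 : Real.sqrt (dip d b b) ^ 2 = dip d b b := Real.sq_sqrt hb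
    nlinarith
  calc Real.sqrt (dip d (a + b) (a + b))
      ≤ Real.sqrt ((Real.sqrt (dip d a a) + Real.sqrt (dip d b b)) ^ 2) := Real.sqrt_le_sqrt h1
    _ = Real.sqrt (dip d a a) + Real.sqrt (dip d b b) := by
        rw [Real.sqrt_sq (by positivity)]

/-- Jensen for a probability vector. -/
lemma wsum_sq_le {m : ℕ} (c x : Fin m → ℝ) (hc : ∀ i, 0 ≤ c i) (hsum : ∑ i, c i = 1) :
    (∑ i, c i * x i) ^ 2 ≤ ∑ i, c i * x i ^ 2 := by
  have h := Finset.sum_mul_sq_le_sq_mul_sq Finset.univ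
    (fun i => Real.sqrt (c i)) (fun i => Real.sqrt (c i) * x i)
  have h1 : ∀ i : Fin m, Real.sqrt (c i) * (Real.sqrt (c i) * x i) = c i * x i := by
    intro i
    rw [← mul_assoc, Real.mul_self_sqrt (hc i)]
  have h2 : ∀ i : Fin m, (Real.sqrt (c i)) ^ 2 = c i := fun i => Real.sq_sqrt (hc i)
  have h3 : ∀ i : Fin m, (Real.sqrt (c i) * x i) ^ 2 = c i * x i ^ 2 := by
    intro i
    rw [mul_pow, h2 i]
  simp only [h1, h2, h3, hsum, one_mul] at h
  exact h



lemma quad_le_sup {n : ℕ} (hn : 0 < n) {A : Matrix (Fin n) (Fin n) ℝ}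
    (hA : A.IsHermitian) (v : Fin n → ℝ) :
    v ⬝ᵥ A.mulVec v ≤ (⨆ i, hA.eigenvalues i) * (v ⬝ᵥ v) := by
  haveI : Nonempty (Fin n) := ⟨⟨0, hn⟩⟩
  set U : Matrix (Fin n) (Fin n) ℝ := (hA.eigenvectorUnitary : Matrix (Fin n) (Fin n) ℝ) with hU
  have hstarU : star U = Uᵀ := by
    ext i j; simp [Matrix.star_eq_conjTranspose, Matrix.conjTranspose_apply]
  have hUU : U * Uᵀ = 1 := by
    rw [← hstarU]
    exact (Matrix.mem_unitaryGroup_iff).mp hA.eigenvectorUnitary.2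
  have hspec : A = U * Matrix.diagonal (RCLike.ofReal ∘ hA.eigenvalues) * star U :=
    hA.spectral_theorem
  have hdiag : Matrix.diagonal (RCLike.ofReal ∘ hA.eigenvalues)
      = Matrix.diagonal hA.eigenvalues := by
    congr 1
  rw [hstarU, hdiag] at hspec
  set u : Fin n → ℝ := Uᵀ.mulVec v with hu
  have key0 : v ⬝ᵥ A.mulVec v
      = v ⬝ᵥ ((U * Matrix.diagonal hA.eigenvalues * Uᵀ).mulVec v) := by
    rw [← hspec]
  have key : v ⬝ᵥ A.mulVec v = u ⬝ᵥ (Matrix.diagonal hA.eigenvalues).mulVec u := by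
    rw [key0]
    rw [← Matrix.mulVec_mulVec, ← Matrix.mulVec_mulVec]
    rw [dotProduct_mulVec v U]
    congr 1
    rw [hu]
    rw [← Matrix.vecMul_transpose, Matrix.transpose_transpose]
  have hnorm : u ⬝ᵥ u = v ⬝ᵥ v := by
    rw [hu]
    rw [dotProduct_mulVec]
    have : (Uᵀ.mulVec v) ᵥ* Uᵀ = U.mulVec (Uᵀ.mulVec v) := by
      rw [Matrix.vecMul_transpose]
    rw [this, Matrix.mulVec_mulVec, hUU, Matrix.one_mulVec]
  rw [key]
  have hbdd : BddAbove (Set.range hA.eigenvalues) := Set.Finite.bddAbove (Set.finite_range _)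
  have hle : ∀ i, hA.eigenvalues i ≤ ⨆ j, hA.eigenvalues j := fun i => le_ciSup hbdd i
  have : u ⬝ᵥ (Matrix.diagonal hA.eigenvalues).mulVec u
      = ∑ i, hA.eigenvalues i * (u i) ^ 2 := by
    simp [dotProduct, Matrix.mulVec_diagonal]
    congr 1; ext i; ring
  rw [this, ← hnorm]
  have : u ⬝ᵥ u = ∑ i, (u i) ^ 2 := by
    simp [dotProduct]; congr 1; ext i; ring
  rw [this, Finset.mul_sum]
  apply Finset.sum_le_sum
  intro i _
  exact mul_le_mul_of_nonneg_right (hle i) (sq_nonneg _)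




variable {N n : ℕ} (Φ : Matrix (Fin N) (Fin n) ℝ) (d : Fin N → ℝ)

lemma helper1 (v : Fin n → ℝ) (w : Fin N → ℝ) :
    v ⬝ᵥ (Φᵀ * Matrix.diagonal d).mulVec w = dip d (Φ.mulVec v) w := by
  rw [← Matrix.mulVec_mulVec, dotProduct_mulVec v Φᵀ, Matrix.vecMul_transpose]
  unfold dip
  simp [dotProduct, Matrix.mulVec_diagonal]
  congr 1; ext s; ring

lemma helper2 (v u : Fin n → ℝ) :
    v ⬝ᵥ (Φᵀ * Matrix.diagonal d * Φ).mulVec u = dip d (Φ.mulVec v) (Φ.mulVec u) := by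
  rw [← Matrix.mulVec_mulVec, helper1]

lemma helper3 (M : Matrix (Fin N) (Fin N) ℝ) (v u : Fin n → ℝ) :
    v ⬝ᵥ (Φᵀ * Matrix.diagonal d * M * Φ).mulVec u
      = dip d (Φ.mulVec v) (M.mulVec (Φ.mulVec u)) := by
  have : (Φᵀ * Matrix.diagonal d * M * Φ) = (Φᵀ * Matrix.diagonal d) * (M * Φ) := by
    rw [Matrix.mul_assoc]
  rw [this, ← Matrix.mulVec_mulVec, helper1, ← Matrix.mulVec_mulVec]

/-- full column rank implies `mulVec` injective -/
lemma phi_inj (hΦ : Φ.rank = n) : Function.Injective Φ.mulVec := by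
  have h := Φ.mulVecLin.finrank_range_add_finrank_ker
  rw [Module.finrank_fintype_fun_eq_card, Fintype.card_fin] at h
  have hr : Module.finrank ℝ (LinearMap.range Φ.mulVecLin) = n := hΦ
  have hker : Module.finrank ℝ (LinearMap.ker Φ.mulVecLin) = 0 := by omega
  have : LinearMap.ker Φ.mulVecLin = ⊥ := Submodule.finrank_eq_zero.mp hker
  have hinj : Function.Injective Φ.mulVecLin := LinearMap.ker_eq_bot.mp this
  exact hinj

lemma dip_self_pos_aux {d : Fin N → ℝ} (hd : ∀ s, 0 < d s) (x : Fin N → ℝ)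
    (hx : dip d x x = 0) : x = 0 := by
  have hterm : ∀ s ∈ Finset.univ, 0 ≤ d s * (x s * x s) :=
    fun s _ => mul_nonneg (hd s).le (mul_self_nonneg _)
  have := (Finset.sum_eq_zero_iff_of_nonneg hterm).mp hx
  funext s
  have hs := this s (Finset.mem_univ s)
  have := mul_eq_zero.mp hs
  rcases this with h | h
  · exact absurd h (hd s).ne'
  · have := mul_self_eq_zero.mp h
    exact this

/-- A = ΦᵀDΦ is invertible -/
lemma A_det_isUnit (hd : ∀ s, 0 < d s) (hΦ : Φ.rank = n) :
    IsUnit (Φᵀ * Matrix.diagonal d * Φ).det := by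
  by_contra h
  have hdet : (Φᵀ * Matrix.diagonal d * Φ).det = 0 := by
    simpa [isUnit_iff_ne_zero] using h
  obtain ⟨v, hv0, hv⟩ := (Matrix.exists_mulVec_eq_zero_iff).mpr hdet
  have : dip d (Φ.mulVec v) (Φ.mulVec v) = 0 := by
    rw [← helper2, hv, dotProduct_zero]
  have hΦv : Φ.mulVec v = 0 := dip_self_pos_aux hd _ this
  have : v = 0 := by
    apply phi_inj Φ hΦ
    rw [hΦv, Matrix.mulVec_zero]
  exact hv0 this




variable {N n : ℕ}


/-- P is nonexpansive in the d-weighted norm. -/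
lemma P_nonexpansive {P : Matrix (Fin N) (Fin N) ℝ} {d : Fin N → ℝ}
    (hPnonneg : ∀ i j, 0 ≤ P i j) (hProw : ∀ i, ∑ j, P i j = 1)
    (hd : ∀ s, 0 ≤ d s) (hstat : Matrix.vecMul d P = d) (x : Fin N → ℝ) :
    dip d (P.mulVec x) (P.mulVec x) ≤ dip d x x := by
  unfold dip
  have hpt : ∀ s, P.mulVec x s * P.mulVec x s ≤ ∑ j, P s j * x j ^ 2 := by
    intro s
    have := wsum_sq_le (fun j => P s j) x (hPnonneg s) (hProw s)
    calc P.mulVec x s * P.mulVec x s = (∑ j, P s j * x j) ^ 2 := by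
          simp [Matrix.mulVec, dotProduct]; ring
      _ ≤ ∑ j, P s j * x j ^ 2 := this
  calc ∑ s, d s * (P.mulVec x s * P.mulVec x s)
      ≤ ∑ s, d s * ∑ j, P s j * x j ^ 2 := by
        apply Finset.sum_le_sum
        intro s _
        exact mul_le_mul_of_nonneg_left (hpt s) (hd s)
    _ = ∑ j, (∑ s, d s * P s j) * x j ^ 2 := by
        simp only [Finset.mul_sum, Finset.sum_mul]
        rw [Finset.sum_comm]
        apply Finset.sum_congr rfl; intro s _
        apply Finset.sum_congr rfl; intro j _
        ring
    _ = ∑ j, d j * (x j * x j) := by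
        apply Finset.sum_congr rfl
        intro j _
        have : (∑ s, d s * P s j) = d j := by
          have := congrFun hstat j
          simpa [Matrix.vecMul, dotProduct] using this
        rw [this]; ring

/-- the D-orthogonal projection onto the range of Φ is nonexpansive -/
lemma proj_nonexpansive (Φ : Matrix (Fin N) (Fin n) ℝ) {d : Fin N → ℝ}
    (hd : ∀ s, 0 ≤ d s)
    (hA : IsUnit (Φᵀ * Matrix.diagonal d * Φ).det) (x : Fin N → ℝ) :
    dip d (Φ.mulVec ((Φᵀ * Matrix.diagonal d * Φ)⁻¹.mulVec ((Φᵀ * Matrix.diagonal d).mulVec x)))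
          (Φ.mulVec ((Φᵀ * Matrix.diagonal d * Φ)⁻¹.mulVec ((Φᵀ * Matrix.diagonal d).mulVec x)))
      ≤ dip d x x := by
  set A := Φᵀ * Matrix.diagonal d * Φ with hAdef
  set w : Fin n → ℝ := A⁻¹.mulVec ((Φᵀ * Matrix.diagonal d).mulVec x) with hw
  set p : Fin N → ℝ := Φ.mulVec w with hp
  have hAw : A.mulVec w = (Φᵀ * Matrix.diagonal d).mulVec x := by
    rw [hw, Matrix.mulVec_mulVec, Matrix.mul_nonsing_inv _ hA, Matrix.one_mulVec]
  have horth : dip d p (x - p) = 0 := by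
    have h1 : dip d p (x - p) = w ⬝ᵥ (Φᵀ * Matrix.diagonal d).mulVec (x - p) := by
      rw [hp, helper1]
    have h2 : (Φᵀ * Matrix.diagonal d).mulVec (x - p) = 0 := by
      rw [Matrix.mulVec_sub]
      have : (Φᵀ * Matrix.diagonal d).mulVec p = A.mulVec w := by
        rw [hp, Matrix.mulVec_mulVec, hAdef]
      rw [this, hAw, sub_self]
    rw [h1, h2, dotProduct_zero]
  have hxpp : dip d x x = dip d p p + dip d (x - p) (x - p) := by
    have : x = p + (x - p) := by ring
    calc dip d x x = dip d (p + (x - p)) (p + (x - p)) := by rw [← this]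
      _ = dip d p p + 2 * dip d p (x - p) + dip d (x - p) (x - p) := dip_add_add ..
      _ = dip d p p + dip d (x - p) (x - p) := by rw [horth]; ring
  rw [hxpp]
  have := dip_self_nonneg hd (x := x - p) (d := d)
  linarith

variable {N n : ℕ} {P : Matrix (Fin N) (Fin N) ℝ} {d : Fin N → ℝ} {γ : ℝ}
  (Φ : Matrix (Fin N) (Fin n) ℝ)

/-- B = ΦᵀD(γP−I)Φ is invertible -/
lemma B_det_isUnit (hPnonneg : ∀ i j, 0 ≤ P i j) (hProw : ∀ i, ∑ j, P i j = 1)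
    (hdpos : ∀ s, 0 < d s) (hstat : Matrix.vecMul d P = d)
    (hγ0 : 0 < γ) (hγ1 : γ < 1) (hΦ : Φ.rank = n) :
    IsUnit (Φᵀ * Matrix.diagonal d * (γ • P - 1) * Φ).det := by
  have hd : ∀ s, 0 ≤ d s := fun s => (hdpos s).le
  by_contra h
  have hdet : (Φᵀ * Matrix.diagonal d * (γ • P - 1) * Φ).det = 0 := by
    simpa [isUnit_iff_ne_zero] using h
  obtain ⟨v, hv0, hv⟩ := (Matrix.exists_mulVec_eq_zero_iff).mpr hdet
  set x : Fin N → ℝ := Φ.mulVec v with hx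
  have hquad : dip d x ((γ • P - 1).mulVec x) = 0 := by
    rw [hx, ← helper3, hv, dotProduct_zero]
  have hexp : (γ • P - 1).mulVec x = γ • P.mulVec x - x := by
    rw [Matrix.sub_mulVec, Matrix.smul_mulVec, Matrix.one_mulVec]
  have hsplit : dip d x (γ • P.mulVec x - x) = γ * dip d x (P.mulVec x) - dip d x x := by
    unfold dip
    simp only [Pi.sub_apply, Pi.smul_apply, smul_eq_mul, Finset.mul_sum, ← Finset.sum_sub_distrib]
    apply Finset.sum_congr rfl; intro s _; ring
  rw [hexp, hsplit] at hquad
  -- Cauchy-Schwarz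
  have hcs : dip d x (P.mulVec x) ≤ dip d x x := by
    have h1 := dip_le_sqrt hd x (P.mulVec x)
    have h2 := P_nonexpansive hPnonneg hProw hd hstat x
    have h3 : Real.sqrt (dip d (P.mulVec x) (P.mulVec x)) ≤ Real.sqrt (dip d x x) :=
      Real.sqrt_le_sqrt h2
    have h4 : Real.sqrt (dip d x x) * Real.sqrt (dip d x x) = dip d x x :=
      Real.mul_self_sqrt (dip_self_nonneg hd x)
    calc dip d x (P.mulVec x) ≤ Real.sqrt (dip d x x) * Real.sqrt (dip d (P.mulVec x) (P.mulVec x)) := h1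
      _ ≤ Real.sqrt (dip d x x) * Real.sqrt (dip d x x) :=
          mul_le_mul_of_nonneg_left h3 (Real.sqrt_nonneg _)
      _ = dip d x x := h4
  have hxx : dip d x x ≤ 0 := by nlinarith [dip_self_nonneg hd x]
  have hx0 : dip d x x = 0 := le_antisymm hxx (dip_self_nonneg hd x)
  have : x = 0 := dip_self_pos_aux hdpos x hx0
  have hv' : v = 0 := by
    apply phi_inj Φ hΦ
    rw [← hx, this, Matrix.mulVec_zero]
  exact hv0 hv'

/-- contraction of the map G around its fixed point θstar, in the D-norm. -/
lemma G_contract (hPnonneg : ∀ i j, 0 ≤ P i j) (hProw : ∀ i, ∑ j, P i j = 1)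
    (hdpos : ∀ s, 0 < d s) (hstat : Matrix.vecMul d P = d)
    (hγ0 : 0 < γ) (hγ1 : γ < 1) (hΦ : Φ.rank = n) (R : Fin N → ℝ)
    (hA : IsUnit (Φᵀ * Matrix.diagonal d * Φ).det)
    (hB : IsUnit (Φᵀ * Matrix.diagonal d * (γ • P - 1) * Φ).det)
    (b : Fin n → ℝ) :
    Real.sqrt (dip d
      (Φ.mulVec ((Φᵀ * Matrix.diagonal d * Φ)⁻¹.mulVec
          ((Φᵀ * Matrix.diagonal d).mulVec (R + γ • P.mulVec (Φ.mulVec b))))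
        - Φ.mulVec (-((Φᵀ * Matrix.diagonal d * (γ • P - 1) * Φ)⁻¹.mulVec ((Φᵀ * Matrix.diagonal d).mulVec R))))
      (Φ.mulVec ((Φᵀ * Matrix.diagonal d * Φ)⁻¹.mulVec
          ((Φᵀ * Matrix.diagonal d).mulVec (R + γ • P.mulVec (Φ.mulVec b))))
        - Φ.mulVec (-((Φᵀ * Matrix.diagonal d * (γ • P - 1) * Φ)⁻¹.mulVec ((Φᵀ * Matrix.diagonal d).mulVec R)))))
      ≤ γ * Real.sqrt (dip d (Φ.mulVec b - Φ.mulVec (-((Φᵀ * Matrix.diagonal d * (γ • P - 1) * Φ)⁻¹.mulVec ((Φᵀ * Matrix.diagonal d).mulVec R))))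
          (Φ.mulVec b - Φ.mulVec (-((Φᵀ * Matrix.diagonal d * (γ • P - 1) * Φ)⁻¹.mulVec ((Φᵀ * Matrix.diagonal d).mulVec R))))) := by
  have hd : ∀ s, 0 ≤ d s := fun s => (hdpos s).le
  set A := Φᵀ * Matrix.diagonal d * Φ with hAdef
  set B := Φᵀ * Matrix.diagonal d * (γ • P - 1) * Φ with hBdef
  set θs : Fin n → ℝ := -(B⁻¹.mulVec ((Φᵀ * Matrix.diagonal d).mulVec R)) with hθs
  set Gb : Fin n → ℝ := A⁻¹.mulVec ((Φᵀ * Matrix.diagonal d).mulVec (R + γ • P.mulVec (Φ.mulVec b))) with hGb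
  -- fixed point property: A θs = ΦᵀD (R + γ P Φ θs)
  have hBθs : B.mulVec θs = -((Φᵀ * Matrix.diagonal d).mulVec R) := by
    rw [hθs, Matrix.mulVec_neg, Matrix.mulVec_mulVec, Matrix.mul_nonsing_inv _ hB, Matrix.one_mulVec]
  have hBsplit : ∀ u : Fin n → ℝ, B.mulVec u
      = γ • (Φᵀ * Matrix.diagonal d).mulVec (P.mulVec (Φ.mulVec u)) - A.mulVec u := by
    intro u
    rw [hBdef, hAdef]
    have e1 : Φᵀ * Matrix.diagonal d * (γ • P - 1) * Φ
        = (Φᵀ * Matrix.diagonal d) * ((γ • P - 1) * Φ) := by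
      rw [Matrix.mul_assoc]
    simp only [← Matrix.mulVec_mulVec, Matrix.sub_mulVec, Matrix.smul_mulVec,
      Matrix.one_mulVec, Matrix.mulVec_sub, Matrix.mulVec_smul]
  have hfix : A.mulVec θs = (Φᵀ * Matrix.diagonal d).mulVec (R + γ • P.mulVec (Φ.mulVec θs)) := by
    have h := hBsplit θs
    rw [hBθs] at h
    have : A.mulVec θs = γ • (Φᵀ * Matrix.diagonal d).mulVec (P.mulVec (Φ.mulVec θs))
        + (Φᵀ * Matrix.diagonal d).mulVec R := by
      linear_combination (norm := module) h
    rw [this, Matrix.mulVec_add, Matrix.mulVec_smul]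
    abel
  -- Gb - θs = A⁻¹ ΦᵀD (γ P Φ (b - θs))
  have hdiff : Gb - θs = A⁻¹.mulVec ((Φᵀ * Matrix.diagonal d).mulVec (γ • P.mulVec (Φ.mulVec b - Φ.mulVec θs))) := by
    have hAinv : ∀ u, A⁻¹.mulVec (A.mulVec u) = u := by
      intro u
      rw [Matrix.mulVec_mulVec, Matrix.nonsing_inv_mul _ hA, Matrix.one_mulVec]
    have hθs' : θs = A⁻¹.mulVec ((Φᵀ * Matrix.diagonal d).mulVec (R + γ • P.mulVec (Φ.mulVec θs))) := by
      rw [← hfix, hAinv]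
    rw [hGb]
    conv_lhs => rw [hθs']
    rw [← Matrix.mulVec_sub, ← Matrix.mulVec_sub]
    congr 1
    congr 1
    simp only [Matrix.mulVec_sub, Matrix.mulVec_smul, add_sub_add_left_eq_sub]
    rw [← smul_sub, ← Matrix.mulVec_sub]
  -- now apply projection nonexpansiveness and P nonexpansiveness
  set y : Fin N → ℝ := γ • P.mulVec (Φ.mulVec b - Φ.mulVec θs) with hy
  have hΦdiff : Φ.mulVec Gb - Φ.mulVec θs
      = Φ.mulVec (A⁻¹.mulVec ((Φᵀ * Matrix.diagonal d).mulVec y)) := by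
    rw [← Matrix.mulVec_sub, hdiff]
  rw [hΦdiff]
  have h1 := proj_nonexpansive Φ hd hA y
  rw [← hAdef] at h1
  have h2 : dip d y y = γ^2 * dip d (P.mulVec (Φ.mulVec b - Φ.mulVec θs)) (P.mulVec (Φ.mulVec b - Φ.mulVec θs)) := by
    rw [hy]
    unfold dip
    simp only [Pi.smul_apply, smul_eq_mul, Finset.mul_sum]
    apply Finset.sum_congr rfl; intro s _; ring
  have h3 := P_nonexpansive hPnonneg hProw hd hstat (Φ.mulVec b - Φ.mulVec θs)
  have hchain : dip d (Φ.mulVec (A⁻¹.mulVec ((Φᵀ * Matrix.diagonal d).mulVec y)))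
      (Φ.mulVec (A⁻¹.mulVec ((Φᵀ * Matrix.diagonal d).mulVec y)))
      ≤ γ^2 * dip d (Φ.mulVec b - Φ.mulVec θs) (Φ.mulVec b - Φ.mulVec θs) := by
    calc _ ≤ dip d y y := h1
      _ = γ^2 * dip d (P.mulVec (Φ.mulVec b - Φ.mulVec θs)) (P.mulVec (Φ.mulVec b - Φ.mulVec θs)) := h2
      _ ≤ γ^2 * dip d (Φ.mulVec b - Φ.mulVec θs) (Φ.mulVec b - Φ.mulVec θs) := by
          apply mul_le_mul_of_nonneg_left h3 (sq_nonneg γ)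
  calc Real.sqrt (dip d (Φ.mulVec (A⁻¹.mulVec ((Φᵀ * Matrix.diagonal d).mulVec y)))
            (Φ.mulVec (A⁻¹.mulVec ((Φᵀ * Matrix.diagonal d).mulVec y))))
      ≤ Real.sqrt (γ^2 * dip d (Φ.mulVec b - Φ.mulVec θs) (Φ.mulVec b - Φ.mulVec θs)) :=
        Real.sqrt_le_sqrt hchain
    _ = γ * Real.sqrt (dip d (Φ.mulVec b - Φ.mulVec θs) (Φ.mulVec b - Φ.mulVec θs)) := by
        rw [Real.sqrt_mul (sq_nonneg γ), Real.sqrt_sq hγ0.le]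



variable {Ω : Type*} [MeasurableSpace Ω] {Pr : Measure Ω} [IsProbabilityMeasure Pr]

/-- E g ≤ √(E g²) for nonneg g in L². -/
lemma exp_le_sqrt {g : Ω → ℝ} (hg : MemLp g 2 Pr) (hnn : ∀ ω, 0 ≤ g ω) :
    ∫ ω, g ω ∂Pr ≤ Real.sqrt (∫ ω, (g ω) ^ 2 ∂Pr) := by
  have hvar := variance_eq_sub hg
  have hvnn := variance_nonneg g Pr
  have h1 : (∫ ω, g ω ∂Pr) ^ 2 ≤ ∫ ω, (g ω) ^ 2 ∂Pr := by
    have : (Pr[g ^ 2] : ℝ) = ∫ ω, (g ω) ^ 2 ∂Pr := by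
      congr 1
    nlinarith [hvar, hvnn]
  have h2 : 0 ≤ ∫ ω, g ω ∂Pr := integral_nonneg hnn
  calc ∫ ω, g ω ∂Pr = Real.sqrt ((∫ ω, g ω ∂Pr) ^ 2) := (Real.sqrt_sq h2).symm
    _ ≤ Real.sqrt (∫ ω, (g ω) ^ 2 ∂Pr) := Real.sqrt_le_sqrt h1

/-- membership in L² of weighted-quadratic square roots -/
lemma memL2_sqrt_quad {m : ℕ} {v : Ω → Fin m → ℝ} (c : Fin m → ℝ) (hc : ∀ s, 0 ≤ c s)
    (hv : ∀ i, MemLp (fun ω => v ω i) 2 Pr) :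
    MemLp (fun ω => Real.sqrt (∑ s, c s * (v ω s) ^ 2)) 2 Pr := by
  have hmeas : AEStronglyMeasurable (fun ω => Real.sqrt (∑ s, c s * (v ω s) ^ 2)) Pr := by
    apply Continuous.comp_aestronglyMeasurable Real.continuous_sqrt
    have h : ∀ i : Fin m, AEStronglyMeasurable (fun x => c i * v x i ^ 2) Pr := by
      intro i
      have := (hv i).aestronglyMeasurable
      have hsq : AEStronglyMeasurable (fun x => v x i ^ 2) Pr := by
        have := this.mul this
        refine this.congr (Filter.Eventually.of_forall fun ω => ?_)
        simp [Pi.mul_apply]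
        ring
      exact hsq.const_mul (c i)
    have := Finset.aestronglyMeasurable_sum (Finset.univ) (fun i _ => h i)
    refine this.congr (Filter.Eventually.of_forall fun ω => ?_)
    simp [Finset.sum_apply]
  have hsq : (fun ω => (Real.sqrt (∑ s, c s * (v ω s) ^ 2)) ^ 2)
      = fun ω => ∑ s, c s * (v ω s) ^ 2 := by
    funext ω
    apply Real.sq_sqrt
    exact Finset.sum_nonneg fun s _ => mul_nonneg (hc s) (sq_nonneg _)
  have hint : Integrable (fun ω => ∑ s, c s * (v ω s) ^ 2) Pr := by
    apply integrable_finset_sum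
    intro i _
    exact ((hv i).integrable_sq).const_mul (c i)
  refine (memLp_two_iff_integrable_sq hmeas).mpr ?_
  rw [hsq]
  exact hint

lemma integral_sq_sqrt_quad {m : ℕ} {v : Ω → Fin m → ℝ} (c : Fin m → ℝ) (hc : ∀ s, 0 ≤ c s) :
    ∀ ω, (Real.sqrt (∑ s, c s * (v ω s) ^ 2)) ^ 2 = ∑ s, c s * (v ω s) ^ 2 := by
  intro ω
  exact Real.sq_sqrt (Finset.sum_nonneg fun s _ => mul_nonneg (hc s) (sq_nonneg _))

/-- components of affine images are in L² -/
lemma memL2_affine {a b : ℕ} (M : Matrix (Fin a) (Fin b) ℝ) (c : Fin a → ℝ)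
    {v : Ω → Fin b → ℝ} (hv : ∀ i, MemLp (fun ω => v ω i) 2 Pr) (s : Fin a) :
    MemLp (fun ω => M.mulVec (v ω) s + c s) 2 Pr := by
  have : (fun ω => M.mulVec (v ω) s + c s)
      = fun ω => (∑ i, M s i * v ω i) + c s := by
    funext ω
    simp [Matrix.mulVec, dotProduct]
  rw [this]
  have h1 : MemLp (fun ω => ∑ i, M s i * v ω i) 2 Pr := by
    have := memLp_finset_sum' Finset.univ (fun i (_ : i ∈ Finset.univ) => (hv i).const_mul (M s i))
    exact this.ae_eq (Filter.Eventually.of_forall fun ω => by simp [Finset.sum_apply])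
  have h2 : MemLp (fun _ : Ω => c s) 2 Pr := memLp_const _
  exact (h1.add h2).ae_eq (Filter.Eventually.of_forall fun ω => rfl)



section Main
variable {N n : ℕ}
  (P : Matrix (Fin N) (Fin N) ℝ) (d : Fin N → ℝ) (γ : ℝ)
  (Φ : Matrix (Fin N) (Fin n) ℝ) (R : Fin N → ℝ)

theorem main_aux
    (hN : 0 < N) (hn : 0 < n) (hnN : n ≤ N)
    (hPnonneg : ∀ i j, 0 ≤ P i j)
    (hProw : ∀ i, ∑ j, P i j = 1)
    (hdpos : ∀ s, 0 < d s)
    (hdsum : ∑ s, d s = 1)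
    (hstat : Matrix.vecMul d P = d)
    (hγ0 : 0 < γ) (hγ1 : γ < 1)
    (hΦ : Φ.rank = n)
    (hHerm : (Φᵀ * Matrix.diagonal d * Φ).IsHermitian)
    {Ω : Type*} [MeasurableSpace Ω] (Pr : Measure Ω) [IsProbabilityMeasure Pr]
    (T : ℕ) (hT : 0 < T)
    (ε : ℕ → ℝ) (hε : ∀ k, 1 ≤ k → k ≤ T → 0 ≤ ε k)
    (θ : ℕ → Ω → Fin n → ℝ)
    (hL2 : ∀ k ≤ T, ∀ i, MemLp (fun ω => θ k ω i) 2 Pr)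
    (hrec : ∀ k < T,
      (∫ ω, (∑ i, (θ (k + 1) ω i -
        ((Φᵀ * Matrix.diagonal d * Φ)⁻¹.mulVec
          ((Φᵀ * Matrix.diagonal d).mulVec
            (R + γ • P.mulVec (Φ.mulVec (θ k ω))))) i) ^ 2) ∂Pr) ≤ ε (k + 1)) :
    (∫ ω, Real.sqrt ((Φ.mulVec (θ T ω) - Φ.mulVec (-((Φᵀ * Matrix.diagonal d * (γ • P - 1) * Φ)⁻¹.mulVec ((Φᵀ * Matrix.diagonal d).mulVec R)))) ⬝ᵥ
        (Matrix.diagonal d).mulVec (Φ.mulVec (θ T ω) - Φ.mulVec (-((Φᵀ * Matrix.diagonal d * (γ • P - 1) * Φ)⁻¹.mulVec ((Φᵀ * Matrix.diagonal d).mulVec R))))) ∂Pr) ≤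
      Real.sqrt (⨆ i, hHerm.eigenvalues i) *
        (∑ k ∈ Finset.Icc 1 T, γ ^ (T - k) * Real.sqrt (ε k)) +
      γ ^ T * (∫ ω, Real.sqrt ((Φ.mulVec (θ 0 ω) - Φ.mulVec (-((Φᵀ * Matrix.diagonal d * (γ • P - 1) * Φ)⁻¹.mulVec ((Φᵀ * Matrix.diagonal d).mulVec R)))) ⬝ᵥ
        (Matrix.diagonal d).mulVec (Φ.mulVec (θ 0 ω) - Φ.mulVec (-((Φᵀ * Matrix.diagonal d * (γ • P - 1) * Φ)⁻¹.mulVec ((Φᵀ * Matrix.diagonal d).mulVec R))))) ∂Pr) := by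
  have hd : ∀ s, 0 ≤ d s := fun s => (hdpos s).le
  have hA : IsUnit (Φᵀ * Matrix.diagonal d * Φ).det := A_det_isUnit Φ d hdpos hΦ
  have hB : IsUnit (Φᵀ * Matrix.diagonal d * (γ • P - 1) * Φ).det :=
    B_det_isUnit Φ hPnonneg hProw hdpos hstat hγ0 hγ1 hΦ
  set θs : Fin n → ℝ :=
    -((Φᵀ * Matrix.diagonal d * (γ • P - 1) * Φ)⁻¹.mulVec ((Φᵀ * Matrix.diagonal d).mulVec R)) with hθs
  set Gv : (Fin n → ℝ) → (Fin n → ℝ) := fun θv =>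
    (Φᵀ * Matrix.diagonal d * Φ)⁻¹.mulVec
      ((Φᵀ * Matrix.diagonal d).mulVec (R + γ • P.mulVec (Φ.mulVec θv))) with hGv
  -- dot product in terms of dip
  have hdot : ∀ v : Fin N → ℝ, v ⬝ᵥ (Matrix.diagonal d).mulVec v = dip d v v := by
    intro v
    unfold dip dotProduct
    refine Finset.sum_congr rfl fun s _ => ?_
    rw [Matrix.mulVec_diagonal]; ring
  have hdipsq : ∀ x : Fin N → ℝ, dip d x x = ∑ s, d s * (x s) ^ 2 := by
    intro x
    unfold dip
    exact Finset.sum_congr rfl fun s _ => by ring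
  -- the error process
  set X : ℕ → Ω → ℝ := fun k ω =>
    Real.sqrt (dip d (Φ.mulVec (θ k ω) - Φ.mulVec θs) (Φ.mulVec (θ k ω) - Φ.mulVec θs)) with hX
  set Y : ℕ → Ω → ℝ := fun k ω =>
    Real.sqrt (∑ i, (θ (k + 1) ω i - Gv (θ k ω) i) ^ 2) with hY
  set lam : ℝ := ⨆ i, hHerm.eigenvalues i with hlam
  -- nonnegativity of the top eigenvalue
  haveI : Nonempty (Fin n) := ⟨⟨0, hn⟩⟩
  have hPSD : (Φᵀ * Matrix.diagonal d * Φ).PosSemidef := by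
    refine Matrix.PosSemidef.of_dotProduct_mulVec_nonneg hHerm fun x => ?_
    have hsx : star x = x := by
      funext i; simp
    rw [hsx, helper2]
    exact dip_self_nonneg hd _
  have hlamnn : 0 ≤ lam := by
    have h0 : (0:ℝ) ≤ hHerm.eigenvalues ⟨0, hn⟩ := hPSD.eigenvalues_nonneg _
    have hb : BddAbove (Set.range hHerm.eigenvalues) := Set.Finite.bddAbove (Set.finite_range _)
    exact h0.trans (le_ciSup hb _)
  -- the norm bound via the top eigenvalue
  have hΦbound : ∀ v : Fin n → ℝ,
      Real.sqrt (dip d (Φ.mulVec v) (Φ.mulVec v)) ≤ Real.sqrt lam * Real.sqrt (∑ i, (v i) ^ 2) := by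
    intro v
    have h1 : dip d (Φ.mulVec v) (Φ.mulVec v) = v ⬝ᵥ (Φᵀ * Matrix.diagonal d * Φ).mulVec v :=
      (helper2 Φ d v v).symm
    have h2 := quad_le_sup hn hHerm v
    have h3 : v ⬝ᵥ v = ∑ i, (v i) ^ 2 := by
      unfold dotProduct
      exact Finset.sum_congr rfl fun i _ => by ring
    calc Real.sqrt (dip d (Φ.mulVec v) (Φ.mulVec v))
        ≤ Real.sqrt (lam * ∑ i, (v i) ^ 2) := by
          apply Real.sqrt_le_sqrt
          rw [h1, ← h3]
          exact h2
      _ = Real.sqrt lam * Real.sqrt (∑ i, (v i) ^ 2) := Real.sqrt_mul hlamnn _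
  -- pointwise recursion step
  have hstep : ∀ k (ω : Ω), X (k + 1) ω ≤ Real.sqrt lam * Y k ω + γ * X k ω := by
    intro k ω
    have hdecomp : Φ.mulVec (θ (k + 1) ω) - Φ.mulVec θs
        = (Φ.mulVec (θ (k + 1) ω) - Φ.mulVec (Gv (θ k ω)))
          + (Φ.mulVec (Gv (θ k ω)) - Φ.mulVec θs) := by abel
    have htri : X (k + 1) ω
        ≤ Real.sqrt (dip d (Φ.mulVec (θ (k + 1) ω) - Φ.mulVec (Gv (θ k ω)))
              (Φ.mulVec (θ (k + 1) ω) - Φ.mulVec (Gv (θ k ω))))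
          + Real.sqrt (dip d (Φ.mulVec (Gv (θ k ω)) - Φ.mulVec θs)
              (Φ.mulVec (Gv (θ k ω)) - Φ.mulVec θs)) := by
      simp only [hX]
      rw [hdecomp]
      exact sqrt_dip_add hd _ _
    have hterm1 : Real.sqrt (dip d (Φ.mulVec (θ (k + 1) ω) - Φ.mulVec (Gv (θ k ω)))
          (Φ.mulVec (θ (k + 1) ω) - Φ.mulVec (Gv (θ k ω)))) ≤ Real.sqrt lam * Y k ω := by
      have he : Φ.mulVec (θ (k + 1) ω) - Φ.mulVec (Gv (θ k ω))
          = Φ.mulVec (θ (k + 1) ω - Gv (θ k ω)) := (Matrix.mulVec_sub Φ _ _).symm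
      rw [he]
      have := hΦbound (θ (k + 1) ω - Gv (θ k ω))
      simp only [hY, Pi.sub_apply] at this ⊢
      exact this
    have hterm2 : Real.sqrt (dip d (Φ.mulVec (Gv (θ k ω)) - Φ.mulVec θs)
          (Φ.mulVec (Gv (θ k ω)) - Φ.mulVec θs)) ≤ γ * X k ω := by
      simp only [hX]
      exact G_contract Φ hPnonneg hProw hdpos hstat hγ0 hγ1 hΦ R hA hB (θ k ω)
    linarith
  -- square integrability of X
  have hXL2 : ∀ k, k ≤ T → MemLp (X k) 2 Pr := by
    intro k hk
    have hcomp : ∀ s : Fin N, MemLp (fun ω => (Φ.mulVec (θ k ω) - Φ.mulVec θs) s) 2 Pr := by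
      intro s
      have := memL2_affine (Pr := Pr) Φ (-(Φ.mulVec θs)) (fun i => hL2 k hk i) s
      exact this.ae_eq (Filter.Eventually.of_forall fun ω => by
        simp [Pi.sub_apply, sub_eq_add_neg])
    have := memL2_sqrt_quad (Pr := Pr) (v := fun ω => Φ.mulVec (θ k ω) - Φ.mulVec θs) d hd hcomp
    exact this.ae_eq (Filter.Eventually.of_forall fun ω => by simp only [hX, hdipsq])
  have hXint : ∀ k, k ≤ T → Integrable (X k) Pr := fun k hk => (hXL2 k hk).integrable one_le_two
  -- square integrability of Y, and its expectation bound
  have hYcomp : ∀ k, k < T → ∀ i : Fin n,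
      MemLp (fun ω => θ (k + 1) ω i - Gv (θ k ω) i) 2 Pr := by
    intro k hk i
    have hGaff : ∀ θv : Fin n → ℝ, Gv θv
        = (γ • ((Φᵀ * Matrix.diagonal d * Φ)⁻¹ * (Φᵀ * Matrix.diagonal d) * P * Φ)).mulVec θv
          + ((Φᵀ * Matrix.diagonal d * Φ)⁻¹ * (Φᵀ * Matrix.diagonal d)).mulVec R := by
      intro θv
      rw [hGv]
      simp only [Matrix.mulVec_add, Matrix.mulVec_smul, Matrix.smul_mulVec,
        ← Matrix.mulVec_mulVec]
      abel
    have h1 : MemLp (fun ω => Gv (θ k ω) i) 2 Pr := by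
      have := memL2_affine (Pr := Pr)
        (γ • ((Φᵀ * Matrix.diagonal d * Φ)⁻¹ * (Φᵀ * Matrix.diagonal d) * P * Φ))
        (((Φᵀ * Matrix.diagonal d * Φ)⁻¹ * (Φᵀ * Matrix.diagonal d)).mulVec R)
        (fun i => hL2 k (by omega) i) i
      exact this.ae_eq (Filter.Eventually.of_forall fun ω => by simp only [hGaff, Pi.add_apply])
    have h2 : MemLp (fun ω => θ (k + 1) ω i) 2 Pr := hL2 (k + 1) (by omega) i
    exact (h2.sub h1).ae_eq (Filter.Eventually.of_forall fun ω => rfl)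
  have hYL2 : ∀ k, k < T → MemLp (Y k) 2 Pr := by
    intro k hk
    have := memL2_sqrt_quad (Pr := Pr)
      (v := fun ω i => θ (k + 1) ω i - Gv (θ k ω) i) (fun _ => (1:ℝ)) (fun _ => zero_le_one)
      (hYcomp k hk)
    exact this.ae_eq (Filter.Eventually.of_forall fun ω => by simp only [hY, one_mul])
  have hYnn : ∀ k (ω : Ω), 0 ≤ Y k ω := fun k ω => Real.sqrt_nonneg _
  have hYexp : ∀ k, k < T → (∫ ω, Y k ω ∂Pr) ≤ Real.sqrt (ε (k + 1)) := by
    intro k hk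
    have h1 := exp_le_sqrt (hYL2 k hk) (hYnn k)
    have h2 : (∫ ω, (Y k ω) ^ 2 ∂Pr) ≤ ε (k + 1) := by
      have heq : ∀ ω, (Y k ω) ^ 2 = ∑ i, (θ (k + 1) ω i - Gv (θ k ω) i) ^ 2 := by
        intro ω
        simp only [hY]
        exact Real.sq_sqrt (Finset.sum_nonneg fun i _ => sq_nonneg _)
      calc (∫ ω, (Y k ω) ^ 2 ∂Pr) = ∫ ω, ∑ i, (θ (k + 1) ω i - Gv (θ k ω) i) ^ 2 ∂Pr := by
            exact integral_congr_ae (Filter.Eventually.of_forall heq)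
        _ ≤ ε (k + 1) := hrec k hk
    calc (∫ ω, Y k ω ∂Pr) ≤ Real.sqrt (∫ ω, (Y k ω) ^ 2 ∂Pr) := h1
      _ ≤ Real.sqrt (ε (k + 1)) := Real.sqrt_le_sqrt h2
  have hYint : ∀ k, k < T → Integrable (Y k) Pr := fun k hk => (hYL2 k hk).integrable one_le_two
  -- integrated recursion step
  have hstepint : ∀ k, k < T →
      (∫ ω, X (k + 1) ω ∂Pr) ≤ Real.sqrt lam * Real.sqrt (ε (k + 1)) + γ * (∫ ω, X k ω ∂Pr) := by
    intro k hk
    have hrhsint : Integrable (fun ω => Real.sqrt lam * Y k ω + γ * X k ω) Pr :=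
      (((hYint k hk).const_mul _).add ((hXint k (by omega)).const_mul _))
    have h1 : (∫ ω, X (k + 1) ω ∂Pr) ≤ ∫ ω, Real.sqrt lam * Y k ω + γ * X k ω ∂Pr :=
      integral_mono (hXint (k + 1) (by omega)) hrhsint (fun ω => hstep k ω)
    have h2 : (∫ ω, Real.sqrt lam * Y k ω + γ * X k ω ∂Pr)
        = Real.sqrt lam * (∫ ω, Y k ω ∂Pr) + γ * (∫ ω, X k ω ∂Pr) := by
      rw [integral_add ((hYint k hk).const_mul _) ((hXint k (by omega)).const_mul _),
        integral_const_mul, integral_const_mul]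
    have h3 : Real.sqrt lam * (∫ ω, Y k ω ∂Pr) ≤ Real.sqrt lam * Real.sqrt (ε (k + 1)) :=
      mul_le_mul_of_nonneg_left (hYexp k hk) (Real.sqrt_nonneg _)
    linarith [h1, h2 ▸ h1]
  -- main induction
  have hXnn : ∀ k, 0 ≤ ∫ ω, X k ω ∂Pr := fun k =>
    integral_nonneg fun ω => Real.sqrt_nonneg _
  have claim : ∀ m, m ≤ T → (∫ ω, X m ω ∂Pr) ≤
      Real.sqrt lam * (∑ k ∈ Finset.Icc 1 m, γ ^ (m - k) * Real.sqrt (ε k))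
        + γ ^ m * (∫ ω, X 0 ω ∂Pr) := by
    intro m
    induction m with
    | zero =>
      intro _
      simp
    | succ m ih =>
      intro hm
      have h1 := hstepint m (by omega)
      have h2 := ih (by omega)
      have h3 : γ * (∫ ω, X m ω ∂Pr) ≤ γ * (Real.sqrt lam * (∑ k ∈ Finset.Icc 1 m, γ ^ (m - k) * Real.sqrt (ε k)) + γ ^ m * (∫ ω, X 0 ω ∂Pr)) :=
        mul_le_mul_of_nonneg_left h2 hγ0.le
      have hsum : (∑ k ∈ Finset.Icc 1 (m + 1), γ ^ (m + 1 - k) * Real.sqrt (ε k))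
          = (∑ k ∈ Finset.Icc 1 m, γ ^ (m + 1 - k) * Real.sqrt (ε k)) + Real.sqrt (ε (m + 1)) := by
        rw [Finset.sum_Icc_succ_top (by omega)]
        simp
      have hγsum : γ * (∑ k ∈ Finset.Icc 1 m, γ ^ (m - k) * Real.sqrt (ε k))
          = ∑ k ∈ Finset.Icc 1 m, γ ^ (m + 1 - k) * Real.sqrt (ε k) := by
        rw [Finset.mul_sum]
        refine Finset.sum_congr rfl fun k hk => ?_
        have hkm : k ≤ m := (Finset.mem_Icc.mp hk).2
        have : m + 1 - k = (m - k) + 1 := by omega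
        rw [this, pow_succ]
        ring
      calc (∫ ω, X (m + 1) ω ∂Pr)
          ≤ Real.sqrt lam * Real.sqrt (ε (m + 1)) + γ * (∫ ω, X m ω ∂Pr) := h1
        _ ≤ Real.sqrt lam * Real.sqrt (ε (m + 1))
            + γ * (Real.sqrt lam * (∑ k ∈ Finset.Icc 1 m, γ ^ (m - k) * Real.sqrt (ε k)) + γ ^ m * (∫ ω, X 0 ω ∂Pr)) := by linarith
        _ = Real.sqrt lam * (Real.sqrt (ε (m + 1)) + γ * (∑ k ∈ Finset.Icc 1 m, γ ^ (m - k) * Real.sqrt (ε k)))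
            + γ ^ (m + 1) * (∫ ω, X 0 ω ∂Pr) := by ring
        _ = Real.sqrt lam * (∑ k ∈ Finset.Icc 1 (m + 1), γ ^ (m + 1 - k) * Real.sqrt (ε k))
            + γ ^ (m + 1) * (∫ ω, X 0 ω ∂Pr) := by
            rw [hγsum, hsum]; ring
  -- conclude
  have hfinal := claim T le_rfl
  have hiXT : (∫ ω, Real.sqrt ((Φ.mulVec (θ T ω) - Φ.mulVec θs) ⬝ᵥ
      (Matrix.diagonal d).mulVec (Φ.mulVec (θ T ω) - Φ.mulVec θs)) ∂Pr) = ∫ ω, X T ω ∂Pr := by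
    refine integral_congr_ae (Filter.Eventually.of_forall fun ω => ?_)
    simp only [hX, hdot]
  have hiX0 : (∫ ω, Real.sqrt ((Φ.mulVec (θ 0 ω) - Φ.mulVec θs) ⬝ᵥ
      (Matrix.diagonal d).mulVec (Φ.mulVec (θ 0 ω) - Φ.mulVec θs)) ∂Pr) = ∫ ω, X 0 ω ∂Pr := by
    refine integral_congr_ae (Filter.Eventually.of_forall fun ω => ?_)
    simp only [hX, hdot]
  rw [hiXT, hiX0]
  exact hfinal

end Main
end PTDaux

/-- If the square-integrable random vectors `θ_0, …, θ_T` satisfy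
`𝔼[‖θ_{k+1} − G(θ_k)‖₂²] ≤ ε_{k+1}` for `k = 0,…,T−1`, where
`G(θ) := (ΦᵀDΦ)⁻¹ΦᵀD(R + γPΦθ)`, then
`𝔼[‖Φθ_T − Φθ*‖_D] ≤ √(λ_max(ΦᵀDΦ)) · ∑_{k=1}^{T} γ^{T−k}√(ε_k)
  + γ^T 𝔼[‖Φθ_0 − Φθ*‖_D]`,
where `θ* := −(ΦᵀD(γP − I)Φ)⁻¹ΦᵀDR`. -/
theorem periodic_TD_expected_error_bound
    (N n : ℕ) (hN : 0 < N) (hn : 0 < n) (hnN : n ≤ N)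
    (P : Matrix (Fin N) (Fin N) ℝ) (d : Fin N → ℝ) (γ : ℝ)
    (Φ : Matrix (Fin N) (Fin n) ℝ) (R : Fin N → ℝ)
    (hPnonneg : ∀ i j, 0 ≤ P i j)
    (hProw : ∀ i, ∑ j, P i j = 1)
    (hdpos : ∀ s, 0 < d s)
    (hdsum : ∑ s, d s = 1)
    (hstat : Matrix.vecMul d P = d)
    (hγ0 : 0 < γ) (hγ1 : γ < 1)
    (hΦ : Φ.rank = n)
    (hHerm : (Φᵀ * Matrix.diagonal d * Φ).IsHermitian)
    {Ω : Type*} [MeasurableSpace Ω] (Pr : Measure Ω) [IsProbabilityMeasure Pr]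
    (T : ℕ) (hT : 0 < T)
    (ε : ℕ → ℝ) (hε : ∀ k, 1 ≤ k → k ≤ T → 0 ≤ ε k)
    (θ : ℕ → Ω → Fin n → ℝ)
    (hL2 : ∀ k ≤ T, ∀ i, MemLp (fun ω => θ k ω i) 2 Pr)
    (hrec : ∀ k < T,
      (∫ ω, (∑ i, (θ (k + 1) ω i -
        ((Φᵀ * Matrix.diagonal d * Φ)⁻¹.mulVec
          ((Φᵀ * Matrix.diagonal d).mulVec
            (R + γ • P.mulVec (Φ.mulVec (θ k ω))))) i) ^ 2) ∂Pr) ≤ ε (k + 1)) :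
    let D : Matrix (Fin N) (Fin N) ℝ := Matrix.diagonal d
    let normD : (Fin N → ℝ) → ℝ := fun v => Real.sqrt (v ⬝ᵥ D.mulVec v)
    let θstar : Fin n → ℝ :=
      -((Φᵀ * D * (γ • P - 1) * Φ)⁻¹.mulVec ((Φᵀ * D).mulVec R))
    (∫ ω, normD (Φ.mulVec (θ T ω) - Φ.mulVec θstar) ∂Pr) ≤
      Real.sqrt (⨆ i, hHerm.eigenvalues i) *
        (∑ k ∈ Finset.Icc 1 T, γ ^ (T - k) * Real.sqrt (ε k)) +
      γ ^ T * (∫ ω, normD (Φ.mulVec (θ 0 ω) - Φ.mulVec θstar) ∂Pr) := by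
  intro D normD θstar
  exact PTDaux.main_aux P d γ Φ R hN hn hnN hPnonneg hProw hdpos hdsum hstat hγ0 hγ1 hΦ hHerm
    Pr T hT ε hε θ hL2 hrec
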